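/- arXiv:2203.12549 — 2 statements merged into one kernel-verified Lean document; each statement's English description precedes it below -/
import Mathlib

section
/- If D is a double circuit of a matroid M, then there exists a partition (D₁, …, D_k) of D such that the circuits of M contained in D are exactly the sets D \ D_i for i ∈ {1, …, k}. -/
open Set

namespace Paper

/-! ### Multigraphs, walks, cycles -/

/-- A multigraph on vertex type `V` with edge type `E`: each edge has an
unordered pair of endpoints (possibly equal, giving a loop). -/
structure Multigraph (V : Type*) (E : Type*) where
  inc : E → Sym2 V

namespace Multigraph

variable {V E : Type*}

/-- `G.IsWalk I u es vs`: starting at vertex `u` and using only edges in `I`,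
the edges `es` form a walk that successively visits the vertices `vs`. -/
inductive IsWalk (G : Multigraph V E) (I : Set E) : V → List E → List V → Prop
  | nil (v : V) : IsWalk G I v [] []
  | cons {u v : V} {e : E} {es : List E} {vs : List V} :
      e ∈ I → G.inc e = s(u, v) → IsWalk G I v es vs → IsWalk G I u (e :: es) (v :: vs)

/-- A walk from `u` to `w` inside the edge set `I`. -/
def IsWalkFrom (G : Multigraph V E) (I : Set E) (u : V) (es : List E) (vs : List V)
    (w : V) : Prop :=
  G.IsWalk I u es vs ∧ (u :: vs).getLast (by simp) = w

/-- `u` and `w` are joined by a walk using edges of `I` (same component of `G[I]`). -/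
def Reachable (G : Multigraph V E) (I : Set E) (u w : V) : Prop :=
  ∃ es vs, G.IsWalkFrom I u es vs w

/-- A cycle based at `v` using edges of `I`: a nonempty closed walk with no repeated
edges and no repeated vertices (except for the base point).  A loop is a cycle of
length `1` and a pair of parallel edges forms a cycle of length `2`. -/
def IsCycle (G : Multigraph V E) (I : Set E) (v : V) (es : List E) (vs : List V) : Prop :=
  G.IsWalkFrom I v es vs v ∧ es ≠ [] ∧ es.Nodup ∧ vs.Nodup

/-- `C` is the edge set of a cycle of the subgraph `G[I]`. -/
def IsCycleIn (G : Multigraph V E) (I : Set E) (C : Set E) : Prop :=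
  ∃ v es vs, G.IsCycle I v es vs ∧ C = {e | e ∈ es}

/-- A path from `u` to `w`: a walk with pairwise distinct vertices. -/
def IsPath (G : Multigraph V E) (I : Set E) (u : V) (es : List E) (vs : List V)
    (w : V) : Prop :=
  G.IsWalkFrom I u es vs w ∧ (u :: vs).Nodup

/-- The vertices covered by an edge set `D`; the vertex set of `G[D]`. -/
def verts (G : Multigraph V E) (D : Set E) : Set V := {v | ∃ e ∈ D, v ∈ G.inc e}

/-- The degree of `v` in the subgraph `G[D]` (loops count twice). -/
noncomputable def degree (G : Multigraph V E) (D : Set E) (v : V) : ℕ :=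
  {e ∈ D | v ∈ G.inc e}.ncard + {e ∈ D | G.inc e = s(v, v)}.ncard

/-- Every connected component of `G[I]` contains at most one cycle:
any two cycles of `G[I]` lying in the same component coincide. -/
def BicircIndep (G : Multigraph V E) (I : Set E) : Prop :=
  ∀ C₁ C₂ : Set E, G.IsCycleIn I C₁ → G.IsCycleIn I C₂ →
    (∃ u w, u ∈ G.verts C₁ ∧ w ∈ G.verts C₂ ∧ G.Reachable I u w) → C₁ = C₂

/-- `M` is the bicircular matroid `B(G)` of the multigraph `G`. -/
def IsBicircularOf (G : Multigraph V E) (M : Matroid E) : Prop :=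
  M.E = univ ∧ ∀ I : Set E, M.Indep I ↔ G.BicircIndep I

end Multigraph

/-! ### Matroid notions -/

variable {α : Type*}

/-- The (extended) rank of a set in a matroid. -/
noncomputable def eRk (M : Matroid α) (X : Set α) : ℕ∞ :=
  ⨆ I ∈ {I | M.Indep I ∧ I ⊆ X}, I.encard

/-- A circuit: a minimal dependent set. -/
def Circuit (M : Matroid α) (C : Set α) : Prop :=
  M.Dep C ∧ ∀ D ⊂ C, ¬ M.Dep D

/-- A double circuit: a finite set `D` with `r(D) = |D| - 2` whose rank does not drop
when any single element is removed. -/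
def DoubleCircuit (M : Matroid α) (D : Set α) : Prop :=
  D ⊆ M.E ∧ D.Finite ∧ eRk M D + 2 = D.encard ∧ ∀ d ∈ D, eRk M (D \ {d}) = eRk M D

/-- `f` is a circuit partition of `D`: a partition of `D` into nonempty parts such that the
circuits of `M` contained in `D` are exactly the complements in `D` of the parts. -/
def CircuitPartition (M : Matroid α) (D : Set α) {k : ℕ} (f : Fin k → Set α) : Prop :=
  (∀ i, (f i).Nonempty) ∧ (∀ i j : Fin k, i ≠ j → Disjoint (f i) (f j)) ∧
    (⋃ i, f i) = D ∧ ∀ C : Set α, (Circuit M C ∧ C ⊆ D) ↔ ∃ i, C = D \ f i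

/-- A part of a partition is singular if it has exactly one element. -/
def PositiveDoubleCircuit (M : Matroid α) (D : Set α) : Prop :=
  DoubleCircuit M D ∧ ∃ (k : ℕ) (f : Fin k → Set α), CircuitPartition M D f ∧
    {i : Fin k | (f i).encard ≠ 1}.ncard < {i : Fin k | (f i).encard = 1}.ncard

/-- A hyperplane (copoint): a maximal proper flat. -/
def Hyperplane (M : Matroid α) (H : Set α) : Prop :=
  M.IsFlat H ∧ H ≠ M.E ∧ ∀ F, M.IsFlat F → H ⊂ F → F = M.E

/-- A coline: a flat of rank `r(M) - 2`. -/
def Coline (M : Matroid α) (L : Set α) : Prop :=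
  M.IsFlat L ∧ eRk M L + 2 = eRk M M.E

/-- A positive coline: more simple copoints on `L` than multiple copoints on `L`. -/
def PositiveColine (M : Matroid α) (L : Set α) : Prop :=
  Coline M L ∧
    {H | Hyperplane M H ∧ L ⊆ H ∧ (H \ L).encard ≠ 1}.ncard <
      {H | Hyperplane M H ∧ L ⊆ H ∧ (H \ L).encard = 1}.ncard

/-- Deletion of a set of elements. -/
def delete (M : Matroid α) (D : Set α) : Matroid α := M.restrict (M.E \ D)

/-- Contraction of a set of elements. -/
def contract (M : Matroid α) (C : Set α) : Matroid α := (delete M✶ C)✶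

/-- `N` is a minor of `M`. -/
def IsMinorOf (N M : Matroid α) : Prop := ∃ C D : Set α, N = delete (contract M C) D

/-- `M` is (isomorphic to) the uniform matroid `U_{r,n}`. -/
def IsUniform (r n : ℕ) {β : Type*} (M : Matroid β) : Prop :=
  M.E.encard = n ∧ ∀ I ⊆ M.E, (M.Indep I ↔ I.encard ≤ (r : ℕ∞))

/-- A simple matroid: every set of at most two elements of the ground set is independent. -/
def IsSimple (M : Matroid α) : Prop := ∀ X ⊆ M.E, X.encard ≤ 2 → M.Indep X


/-! ### Auxiliary rank lemmas -/

section Aux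

variable {M : Matroid α} {I X Y : Set α}

lemma encard_le_eRk (hI : M.Indep I) (hIX : I ⊆ X) : I.encard ≤ eRk M X :=
  le_iSup₂_of_le I ⟨hI, hIX⟩ le_rfl

lemma eRk_eq_of_basis' (hI : M.IsBasis' I X) : eRk M X = I.encard := by
  refine le_antisymm (iSup₂_le fun J hJ => ?_) (encard_le_eRk hI.indep hI.subset)
  obtain ⟨J', hJ', hJJ'⟩ := hJ.1.subset_isBasis'_of_subset hJ.2
  exact (encard_mono hJJ').trans (hJ'.encard_eq_encard hI).le

lemma eRk_le_encard (M : Matroid α) (X : Set α) : eRk M X ≤ X.encard :=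
  iSup₂_le fun _ hJ => encard_mono hJ.2

lemma eRk_le_eRk_add_encard_diff (hYX : Y ⊆ X) :
    eRk M X ≤ eRk M Y + (X \ Y).encard := by
  obtain ⟨I, hI⟩ := M.exists_isBasis' Y
  obtain ⟨J, hJ, hIJ⟩ := hI.indep.subset_isBasis'_of_subset (hI.subset.trans hYX)
  rw [eRk_eq_of_basis' hJ, eRk_eq_of_basis' hI]
  have hsub : J ⊆ I ∪ (X \ Y) := by
    intro e he
    by_cases heY : e ∈ Y
    · exact Or.inl (hI.mem_of_insert_indep heY (hJ.indep.subset (insert_subset he hIJ)))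
    · exact Or.inr ⟨hJ.subset he, heY⟩
  exact (encard_mono hsub).trans (encard_union_le _ _)

lemma eRk_union_circuits_add_two_le {C₁ C₂ : Set α}
    (h₁ : Circuit M C₁) (h₂ : Circuit M C₂) (hne : C₁ ≠ C₂) :
    eRk M (C₁ ∪ C₂) + 2 ≤ (C₁ ∪ C₂).encard := by
  have hC₁E : C₁ ⊆ M.E := h₁.1.subset_ground
  have hint : M.Indep (C₁ ∩ C₂) := by
    by_contra hdep
    have hssne : C₁ ∩ C₂ ≠ C₁ := by
      intro h
      have hC₁C₂ : C₁ ⊆ C₂ := by rw [← h]; exact inter_subset_right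
      exact h₂.2 C₁ (hC₁C₂.ssubset_of_ne hne) h₁.1
    exact h₁.2 _ ((inter_subset_left).ssubset_of_ne hssne)
      ⟨hdep, (inter_subset_left).trans hC₁E⟩
  obtain ⟨J₁, hJ₁, hIJ₁⟩ := hint.subset_isBasis'_of_subset inter_subset_left
  have hJ₁ne : J₁ ≠ C₁ := fun h => h₁.1.1 (h ▸ hJ₁.indep)
  obtain ⟨a, haC₁, haJ₁⟩ : ∃ a, a ∈ C₁ ∧ a ∉ J₁ := by
    by_contra h; push_neg at h
    exact hJ₁ne (hJ₁.subset.antisymm h)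
  obtain ⟨J, hJ, hJ₁J⟩ := hJ₁.indep.subset_isBasis'_of_subset
    (hJ₁.subset.trans subset_union_left)
  have haJ : a ∉ J := fun haJ =>
    haJ₁ (hJ₁.mem_of_insert_indep haC₁ (hJ.indep.subset (insert_subset haJ hJ₁J)))
  have haC₂ : a ∉ C₂ := fun h => haJ₁ (hIJ₁ ⟨haC₁, h⟩)
  obtain ⟨b, hbC₂, hbJ⟩ : ∃ b, b ∈ C₂ ∧ b ∉ J := by
    by_contra h; push_neg at h
    exact h₂.1.1 (hJ.indep.subset h)
  have hba : b ≠ a := fun h => haC₂ (h ▸ hbC₂)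
  rw [eRk_eq_of_basis' hJ]
  have hss : insert a (insert b J) ⊆ C₁ ∪ C₂ :=
    insert_subset (Or.inl haC₁) (insert_subset (Or.inr hbC₂) hJ.subset)
  calc J.encard + 2 = (insert a (insert b J)).encard := by
        rw [encard_insert_of_notMem (by simp [haJ, hba.symm]),
          encard_insert_of_notMem hbJ]
        rw [add_assoc, one_add_one_eq_two]
    _ ≤ (C₁ ∪ C₂).encard := encard_mono hss

lemma exists_circuit_subset_aux (M : Matroid α) :
    ∀ n (X : Set α), X.Finite → X.ncard ≤ n → M.Dep X → ∃ C, Circuit M C ∧ C ⊆ X := by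
  intro n
  induction n with
  | zero =>
    intro X hfin hcard hdep
    have hX : X = ∅ := (ncard_eq_zero hfin).mp (Nat.le_zero.mp hcard)
    exact absurd (hX ▸ M.empty_indep) hdep.1
  | succ n IH =>
    intro X hfin hcard hdep
    by_cases h : ∀ Y, Y ⊂ X → ¬ M.Dep Y
    · exact ⟨X, ⟨hdep, h⟩, Subset.rfl⟩
    · push_neg at h
      obtain ⟨Y, hYX, hYdep⟩ := h
      have hYn : Y.ncard ≤ n := by
        have := ncard_lt_ncard hYX hfin
        omega
      obtain ⟨C, hC, hCY⟩ := IH Y (hfin.subset hYX.subset) hYn hYdep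
      exact ⟨C, hC, hCY.trans hYX.subset⟩

lemma exists_circuit_subset {X : Set α} (hfin : X.Finite) (hdep : M.Dep X) :
    ∃ C, Circuit M C ∧ C ⊆ X :=
  exists_circuit_subset_aux M X.ncard X hfin le_rfl hdep

end Aux

/-- Every double circuit of a matroid has a circuit partition: a partition
`(D₁, …, D_k)` of `D` such that the circuits of `M` contained in `D` are exactly the sets
`D \ D_i`. -/
theorem doubleCircuit_exists_circuitPartition {α : Type*} (M : Matroid α) (D : Set α)
    (hD : DoubleCircuit M D) :
    ∃ (k : ℕ) (f : Fin k → Set α), CircuitPartition M D f := by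
  obtain ⟨hDE, hfin, hrank, hdel⟩ := hD
  have hencne : D.encard ≠ ⊤ := hfin.encard_lt_top.ne
  have hrkne : eRk M D ≠ ⊤ := fun h => hencne (by rw [← hrank, h]; rfl)
  -- D is dependent
  have hDdep : M.Dep D := by
    refine ⟨fun hind => ?_, hDE⟩
    have h1 : D.encard ≤ eRk M D := encard_le_eRk hind Subset.rfl
    rw [← hrank] at h1
    have h2 : eRk M D < eRk M D + 2 :=
      ((ENat.lt_add_one_iff hrkne).mpr le_rfl).trans_le (add_le_add_right one_le_two _)
    exact absurd (h2.trans_le h1) (lt_irrefl _)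
  have hDne : D.Nonempty := by
    rw [nonempty_iff_ne_empty]
    rintro rfl
    exact hDdep.1 M.empty_indep
  -- each D \ {d} is dependent
  have hdeldep : ∀ d ∈ D, M.Dep (D \ {d}) := by
    intro d hd
    refine ⟨fun hind => ?_, diff_subset.trans hDE⟩
    have h1 : (D \ {d}).encard ≤ eRk M (D \ {d}) := encard_le_eRk hind Subset.rfl
    rw [hdel d hd] at h1
    have h2 : (D \ {d}).encard + 1 = eRk M D + 1 + 1 := by
      rw [encard_diff_singleton_add_one hd, ← hrank, add_assoc, one_add_one_eq_two]
    have h3 : (D \ {d}).encard = eRk M D + 1 :=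
      WithTop.add_right_cancel (by simp : (1 : ℕ∞) ≠ ⊤) h2
    rw [h3] at h1
    have h4 : eRk M D < eRk M D + 1 := (ENat.lt_add_one_iff hrkne).mpr le_rfl
    exact absurd (h4.trans_le h1) (lt_irrefl _)
  -- key disjointness fact
  have hkey : ∀ C₁ C₂ : Set α, Circuit M C₁ → C₁ ⊆ D → Circuit M C₂ → C₂ ⊆ D →
      C₁ ≠ C₂ → ∀ d ∈ D, d ∉ C₁ → d ∉ C₂ → False := by
    intro C₁ C₂ h₁ h₁D h₂ h₂D hne d hdD hd1 hd2
    have hsubd : C₁ ∪ C₂ ⊆ D \ {d} :=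
      union_subset (subset_diff_singleton h₁D hd1) (subset_diff_singleton h₂D hd2)
    have hchain : D.encard ≤ (D \ {d}).encard := by
      calc D.encard = eRk M (D \ {d}) + 2 := by rw [← hrank, hdel d hdD]
        _ ≤ (eRk M (C₁ ∪ C₂) + ((D \ {d}) \ (C₁ ∪ C₂)).encard) + 2 :=
            add_le_add_left (eRk_le_eRk_add_encard_diff hsubd) 2
        _ = (eRk M (C₁ ∪ C₂) + 2) + ((D \ {d}) \ (C₁ ∪ C₂)).encard := by ring
        _ ≤ (C₁ ∪ C₂).encard + ((D \ {d}) \ (C₁ ∪ C₂)).encard :=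
            add_le_add_left (eRk_union_circuits_add_two_le h₁ h₂ hne) _
        _ = (D \ {d}).encard := by
            rw [add_comm, encard_diff_add_encard_of_subset hsubd]
    have hlt : (D \ {d}).encard < D.encard :=
      (hfin.subset diff_subset).encard_lt_encard ⟨diff_subset, fun h => (h hdD).2 rfl⟩
    exact absurd (hchain.trans_lt hlt) (lt_irrefl _)
  -- each circuit in D misses something (parts are nonempty)
  have hppart : ∀ C : Set α, Circuit M C → C ⊆ D → (D \ C).Nonempty := by
    intro C hC hCD
    rw [nonempty_iff_ne_empty]
    intro h
    have hCeq : C = D := hCD.antisymm (diff_eq_empty.mp h)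
    subst hCeq
    obtain ⟨d, hd⟩ := hDne
    exact hC.2 (C \ {d}) ⟨diff_subset, fun hsub => (hsub hd).2 rfl⟩ (hdeldep d hd)
  -- the set of complements of circuits in D
  set S : Set (Set α) := {C | Circuit M C ∧ C ⊆ D} with hS
  set T : Set (Set α) := (fun C => D \ C) '' S with hT
  have hTfin : T.Finite :=
    ((hfin.finite_subsets).subset (fun C hC => hC.2)).image _
  haveI : Fintype T := hTfin.fintype
  let e : T ≃ Fin (Fintype.card T) := Fintype.equivFin T
  refine ⟨Fintype.card T, fun i => ((e.symm i : T) : Set α), ?_, ?_, ?_, ?_⟩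
  · intro i
    obtain ⟨C, hC, hCeq⟩ := (e.symm i).2
    show ((e.symm i : T) : Set α).Nonempty
    rw [← hCeq]
    exact hppart C hC.1 hC.2
  · intro i j hij
    obtain ⟨C₁, hC₁, hC₁eq⟩ := (e.symm i).2
    obtain ⟨C₂, hC₂, hC₂eq⟩ := (e.symm j).2
    show Disjoint ((e.symm i : T) : Set α) ((e.symm j : T) : Set α)
    rw [← hC₁eq, ← hC₂eq]
    have hCne : C₁ ≠ C₂ := by
      rintro rfl
      exact hij (e.symm.injective (Subtype.ext (hC₁eq.symm.trans hC₂eq)))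
    rw [disjoint_left]
    rintro d ⟨hdD, hd1⟩ ⟨_, hd2⟩
    exact hkey C₁ C₂ hC₁.1 hC₁.2 hC₂.1 hC₂.2 hCne d hdD hd1 hd2
  · apply Subset.antisymm
    · refine iUnion_subset fun i => ?_
      obtain ⟨C, _, hCeq⟩ := (e.symm i).2
      show ((e.symm i : T) : Set α) ⊆ D
      rw [← hCeq]
      exact diff_subset
    · intro d hd
      obtain ⟨C, hC, hCsub⟩ := exists_circuit_subset hfin.diff (hdeldep d hd)
      have hCS : C ∈ S := ⟨hC, hCsub.trans diff_subset⟩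
      have hmem : D \ C ∈ T := ⟨C, hCS, rfl⟩
      refine mem_iUnion.mpr ⟨e ⟨D \ C, hmem⟩, ?_⟩
      show d ∈ ((e.symm (e ⟨D \ C, hmem⟩) : T) : Set α)
      rw [Equiv.symm_apply_apply]
      exact ⟨hd, fun hdC => (hCsub hdC).2 rfl⟩
  · intro C
    constructor
    · rintro ⟨hC, hCD⟩
      have hmem : D \ C ∈ T := ⟨C, ⟨hC, hCD⟩, rfl⟩
      refine ⟨e ⟨D \ C, hmem⟩, ?_⟩
      show C = D \ ((e.symm (e ⟨D \ C, hmem⟩) : T) : Set α)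
      rw [Equiv.symm_apply_apply]
      exact (diff_diff_cancel_left hCD).symm
    · rintro ⟨i, rfl⟩
      obtain ⟨C', hC', hC'eq⟩ := (e.symm i).2
      show Circuit M (D \ ((e.symm i : T) : Set α)) ∧ D \ ((e.symm i : T) : Set α) ⊆ D
      rw [← hC'eq, diff_diff_cancel_left hC'.2]
      exact hC'

end Paper
end

section
/- For every graph G, the bicircular matroid B(G) is a matroid: the collection of edge sets I such that every connected component of the subgraph induced by I contains at most one cycle satisfies the independence axioms of a matroid. -/
open Set

namespace Paper

/-! ### Matroid notions -/

variable {α : Type*}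

/-! ### Auxiliary development -/

namespace Aux

open Paper Paper.Multigraph

variable {V E : Type*} {G : Multigraph V E} {I J S T : Set E}

/-- edges of a walk lie in `I` -/
lemma walk_edges_mem {u : V} {es : List E} {vs : List V}
    (h : G.IsWalk I u es vs) : ∀ e ∈ es, e ∈ I := by
  induction h with
  | nil => simp
  | cons he hinc _ ih =>
    intro f hf
    rcases List.mem_cons.1 hf with rfl | hf
    · exact he
    · exact ih f hf

lemma walk_length {u : V} {es : List E} {vs : List V}
    (h : G.IsWalk I u es vs) : es.length = vs.length := by
  induction h with
  | nil => rfl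
  | cons _ _ _ ih => simpa using ih

lemma walk_nil_iff {u : V} {es : List E} {vs : List V}
    (h : G.IsWalk I u es vs) : es = [] ↔ vs = [] := by
  cases h <;> simp

/-- every visited vertex is an endpoint of a walk edge -/
lemma walk_vs_mem_inc {u : V} {es : List E} {vs : List V}
    (h : G.IsWalk I u es vs) : ∀ x ∈ vs, ∃ e ∈ es, x ∈ G.inc e := by
  induction h with
  | nil => simp
  | @cons u v e es vs he hinc _ ih =>
    intro x hx
    rcases List.mem_cons.1 hx with rfl | hx
    · exact ⟨e, List.mem_cons_self, by rw [hinc]; simp⟩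
    · obtain ⟨f, hf, hxf⟩ := ih x hx
      exact ⟨f, List.mem_cons_of_mem _ hf, hxf⟩

/-- endpoints of walk edges are visited vertices -/
lemma walk_inc_subset {u : V} {es : List E} {vs : List V}
    (h : G.IsWalk I u es vs) : ∀ e ∈ es, ∀ x ∈ G.inc e, x ∈ u :: vs := by
  induction h with
  | nil => simp
  | @cons u v e es vs he hinc _ ih =>
    intro f hf x hx
    rcases List.mem_cons.1 hf with rfl | hf
    · rw [hinc] at hx
      rcases Sym2.mem_iff.1 hx with rfl | rfl
      · exact List.mem_cons_self
      · exact List.mem_cons_of_mem _ (List.mem_cons_self)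
    · exact List.mem_cons_of_mem _ (ih f hf x hx)

lemma walk_mono (hIJ : I ⊆ J) {u : V} {es : List E} {vs : List V}
    (h : G.IsWalk I u es vs) : G.IsWalk J u es vs := by
  induction h with
  | nil => exact IsWalk.nil _
  | cons he hinc _ ih => exact IsWalk.cons (hIJ he) hinc ih

/-- a walk is a walk in its own edge set -/
lemma walk_self {u : V} {es : List E} {vs : List V}
    (h : G.IsWalk I u es vs) : G.IsWalk {e | e ∈ es} u es vs := by
  induction h with
  | nil => exact IsWalk.nil _
  | @cons u v e es vs he hinc htail ih =>
    exact IsWalk.cons (by simp) hinc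
      (walk_mono (fun f hf => List.mem_cons_of_mem _ hf) ih)

lemma walk_append {u w z : V} {es es' : List E} {vs vs' : List V}
    (h : G.IsWalkFrom I u es vs w) (h' : G.IsWalkFrom I w es' vs' z) :
    G.IsWalkFrom I u (es ++ es') (vs ++ vs') z := by
  obtain ⟨h1, h2⟩ := h
  obtain ⟨h1', h2'⟩ := h'
  induction h1 with
  | nil =>
    simp only [List.getLast_singleton] at h2
    subst h2
    simpa using ⟨h1', h2'⟩
  | @cons u v e es vs he hinc htail ih =>
    have h2t : (v :: vs).getLast (by simp) = w := by
      rw [List.getLast_cons (by simp)] at h2; exact h2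
    obtain ⟨hw1, hw2⟩ := ih h2t
    constructor
    · exact IsWalk.cons he hinc hw1
    · simp only [List.cons_append]
      rw [List.getLast_cons (by simp)]
      exact hw2

lemma walk_single {a b : V} {e : E} (he : e ∈ I) (hinc : G.inc e = s(a, b)) :
    G.IsWalkFrom I a [e] [b] b :=
  ⟨IsWalk.cons he hinc (IsWalk.nil _), by simp⟩

lemma walkFrom_nil (u : V) : G.IsWalkFrom I u [] [] u := ⟨IsWalk.nil _, by simp⟩

lemma walk_reverse {u w : V} {es : List E} {vs : List V}
    (h : G.IsWalkFrom I u es vs w) : ∃ es' vs', G.IsWalkFrom I w es' vs' u := by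
  obtain ⟨h1, h2⟩ := h
  induction h1 with
  | nil =>
    simp only [List.getLast_singleton] at h2; subst h2
    exact ⟨[], [], walkFrom_nil _⟩
  | @cons u v e es vs he hinc htail ih =>
    have h2t : (v :: vs).getLast (by simp) = w := by
      rw [List.getLast_cons (by simp)] at h2; exact h2
    obtain ⟨es', vs', hrev⟩ := ih h2t
    exact ⟨es' ++ [e], vs' ++ [u],
      walk_append hrev (walk_single he (by rw [hinc, Sym2.eq_swap]))⟩

end Aux
namespace Aux2

open Paper Paper.Multigraph Aux

variable {V E : Type*} {G : Multigraph V E} {I J S T : Set E}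

lemma reach_refl (u : V) : G.Reachable I u u := ⟨[], [], walkFrom_nil u⟩

lemma reach_trans {u w z : V} (h : G.Reachable I u w) (h' : G.Reachable I w z) :
    G.Reachable I u z := by
  obtain ⟨es, vs, h⟩ := h; obtain ⟨es', vs', h'⟩ := h'
  exact ⟨_, _, walk_append h h'⟩

lemma reach_symm {u w : V} (h : G.Reachable I u w) : G.Reachable I w u := by
  obtain ⟨es, vs, h⟩ := h
  obtain ⟨es', vs', h'⟩ := walk_reverse h
  exact ⟨_, _, h'⟩

lemma reach_mono (hIJ : I ⊆ J) {u w : V} (h : G.Reachable I u w) : G.Reachable J u w := by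
  obtain ⟨es, vs, h1, h2⟩ := h
  exact ⟨es, vs, walk_mono hIJ h1, h2⟩

lemma inc_eq (G : Multigraph V E) (e : E) : ∃ a b, G.inc e = s(a, b) := by
  induction G.inc e using Sym2.ind with
  | _ p q => exact ⟨p, q, rfl⟩

lemma reach_of_edge {e : E} {a b : V} (he : e ∈ I) (ha : a ∈ G.inc e) (hb : b ∈ G.inc e) :
    G.Reachable I a b := by
  obtain ⟨p, q, hz⟩ := inc_eq G e
  · rw [hz] at ha hb
    rcases Sym2.mem_iff.1 ha with rfl | rfl <;> rcases Sym2.mem_iff.1 hb with rfl | rfl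
    · exact reach_refl _
    · exact ⟨_, _, walk_single he hz⟩
    · exact ⟨_, _, walk_single he (by rw [hz, Sym2.eq_swap])⟩
    · exact reach_refl _

lemma mem_verts {x : V} : x ∈ G.verts S ↔ ∃ e ∈ S, x ∈ G.inc e := Iff.rfl

lemma verts_mono (hST : S ⊆ T) : G.verts S ⊆ G.verts T := by
  rintro x ⟨e, he, hx⟩; exact ⟨e, hST he, hx⟩

lemma verts_union : G.verts (S ∪ T) = G.verts S ∪ G.verts T := by
  ext x
  constructor
  · rintro ⟨e, he | he, hx⟩
    · exact Or.inl ⟨e, he, hx⟩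
    · exact Or.inr ⟨e, he, hx⟩
  · rintro (⟨e, he, hx⟩ | ⟨e, he, hx⟩)
    · exact ⟨e, Or.inl he, hx⟩
    · exact ⟨e, Or.inr he, hx⟩

lemma verts_finite (hS : S.Finite) : (G.verts S).Finite := by
  have : G.verts S = ⋃ e ∈ S, {x | x ∈ G.inc e} := by
    ext x; simp [mem_verts]
  rw [this]
  refine hS.biUnion fun e _ => ?_
  induction G.inc e using Sym2.ind with
  | _ p q => exact ((Set.finite_singleton q).insert p).subset (by intro x hx; simpa using Sym2.mem_iff.1 hx)

/-- split a walk at an occurrence of a vertex -/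
lemma walk_split {u x : V} {es : List E} {vs vs₁ vs₂ : List V}
    (h : G.IsWalk I u es vs) (hvs : vs = vs₁ ++ x :: vs₂) :
    ∃ es₁ es₂, es = es₁ ++ es₂ ∧ es₂.length = vs₂.length ∧
      G.IsWalkFrom I u es₁ (vs₁ ++ [x]) x ∧ G.IsWalk I x es₂ vs₂ := by
  induction h generalizing vs₁ with
  | nil => simp at hvs
  | @cons u v e es vs he hinc htail ih =>
    cases vs₁ with
    | nil =>
      simp only [List.nil_append, List.cons.injEq] at hvs
      obtain ⟨rfl, rfl⟩ := hvs
      exact ⟨[e], es, rfl, walk_length htail, walk_single he hinc, htail⟩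
    | cons y vs₁' =>
      simp only [List.cons_append, List.cons.injEq] at hvs
      obtain ⟨rfl, hvs'⟩ := hvs
      obtain ⟨es₁, es₂, rfl, hlen, ⟨hw1, hl1⟩, hw2⟩ := ih hvs'
      refine ⟨e :: es₁, es₂, rfl, hlen, ⟨IsWalk.cons he hinc hw1, ?_⟩, hw2⟩
      simp only [List.cons_append]
      rw [List.getLast_cons (by simp)]
      exact hl1

lemma getLast_of_split {u x w : V} {vs vs₁ vs₂ : List V} (hvs : vs = vs₁ ++ x :: vs₂)
    (hl : (u :: vs).getLast (by simp) = w) : (x :: vs₂).getLast (by simp) = w := by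
  subst hvs
  rw [← hl]
  exact (List.getLast_congr _ _ (by simp)).trans
    (List.getLast_append_of_ne_nil (l := u :: vs₁) (l' := x :: vs₂) (by simp) (by simp)).symm

/-- split a walk-from at an occurrence of a vertex -/
lemma walkFrom_split {u x w : V} {es : List E} {vs vs₁ vs₂ : List V}
    (h : G.IsWalkFrom I u es vs w) (hvs : vs = vs₁ ++ x :: vs₂) :
    ∃ es₁ es₂, es = es₁ ++ es₂ ∧ es₂.length = vs₂.length ∧
      G.IsWalkFrom I u es₁ (vs₁ ++ [x]) x ∧ G.IsWalkFrom I x es₂ vs₂ w := by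
  obtain ⟨h1, h2⟩ := h
  obtain ⟨es₁, es₂, rfl, hlen, hwf1, hw2⟩ := walk_split h1 hvs
  exact ⟨es₁, es₂, rfl, hlen, hwf1, hw2, getLast_of_split hvs h2⟩

/-- a vertex visited by a walk reaches the endpoint -/
lemma reach_end_of_mem {u w x : V} {es : List E} {vs : List V}
    (h : G.IsWalkFrom I u es vs w) (hx : x ∈ u :: vs) : G.Reachable I x w := by
  rcases List.mem_cons.1 hx with rfl | hx
  · exact ⟨_, _, h⟩
  · obtain ⟨vs₁, vs₂, rfl⟩ := List.append_of_mem hx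
    obtain ⟨es₁, es₂, rfl, hlen, hwf1, hwf2⟩ := walkFrom_split h rfl
    exact ⟨_, _, hwf2⟩

lemma reach_start_of_mem {u w x : V} {es : List E} {vs : List V}
    (h : G.IsWalkFrom I u es vs w) (hx : x ∈ u :: vs) : G.Reachable I u x := by
  rcases List.mem_cons.1 hx with rfl | hx
  · exact reach_refl _
  · obtain ⟨vs₁, vs₂, rfl⟩ := List.append_of_mem hx
    obtain ⟨es₁, es₂, rfl, hlen, hwf1, hwf2⟩ := walkFrom_split ⟨h.1, rfl⟩ rfl
    exact ⟨_, _, hwf1⟩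

end Aux2
namespace Aux3

open Paper Paper.Multigraph Aux Aux2

variable {V E : Type*} {G : Multigraph V E} {I J S T : Set E}

lemma list_set_finite {α : Type*} (l : List α) : {x | x ∈ l}.Finite := l.finite_toSet

lemma list_set_ncard {α : Type*} {l : List α} (h : l.Nodup) : {x | x ∈ l}.ncard = l.length := by
  classical
  have : {x | x ∈ l} = (l.toFinset : Set α) := by ext x; simp
  rw [this, Set.ncard_coe_finset, List.toFinset_card_of_nodup h]

lemma path_edges_nodup {u : V} {es : List E} {vs : List V}
    (h : G.IsWalk I u es vs) (hnd : (u :: vs).Nodup) : es.Nodup := by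
  induction h with
  | nil => simp
  | @cons u v e es vs he hinc htail ih =>
    rw [List.nodup_cons] at hnd
    refine List.nodup_cons.2 ⟨fun hmem => ?_, ih hnd.2⟩
    exact hnd.1 (walk_inc_subset htail e hmem u (by rw [hinc]; simp))

lemma walk_to_path {u w : V} {es : List E} {vs : List V}
    (h : G.IsWalkFrom I u es vs w) :
    ∃ es' vs', G.IsPath I u es' vs' w := by
  obtain ⟨h1, h2⟩ := h
  induction h1 with
  | nil =>
    simp only [List.getLast_singleton] at h2; subst h2
    exact ⟨[], [], walkFrom_nil _, by simp⟩
  | @cons u v e es vs he hinc htail ih =>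
    have h2t : (v :: vs).getLast (by simp) = w := by
      rw [List.getLast_cons (by simp)] at h2; exact h2
    obtain ⟨es', vs', hp, hnd⟩ := ih h2t
    by_cases hu : u ∈ v :: vs'
    · rcases List.mem_cons.1 hu with rfl | hu
      · exact ⟨es', vs', hp, hnd⟩
      · obtain ⟨vs₁, vs₂, rfl⟩ := List.append_of_mem hu
        obtain ⟨es₁, es₂, rfl, hlen, hwf1, hwf2⟩ := walkFrom_split hp rfl
        refine ⟨es₂, vs₂, hwf2, ?_⟩
        have : (u :: vs₂).Sublist (v :: (vs₁ ++ u :: vs₂)) := by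
          refine List.Sublist.cons _ ?_
          exact (List.sublist_append_right vs₁ (u :: vs₂))
        exact this.nodup hnd
    · refine ⟨e :: es', v :: vs', ⟨IsWalk.cons he hinc hp.1, ?_⟩, List.nodup_cons.2 ⟨hu, hnd⟩⟩
      rw [List.getLast_cons (by simp)]
      exact hp.2

/-- splicing a path with a returning edge yields a cycle -/
lemma splice_cycle {z z' : V} {es : List E} {vs : List V} {e : E}
    (hp : G.IsPath I z' es vs z) (he : e ∈ I) (hne : e ∉ es) (hinc : G.inc e = s(z, z')) :
    G.IsCycle I z' (es ++ [e]) (vs ++ [z']) := by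
  obtain ⟨hwf, hnd⟩ := hp
  rw [List.nodup_cons] at hnd
  refine ⟨walk_append hwf (walk_single he hinc), by simp, ?_, ?_⟩
  · exact List.Nodup.append (path_edges_nodup hwf.1 (List.nodup_cons.2 hnd))
      (List.nodup_singleton e) (by simpa using hne)
  · exact List.Nodup.append hnd.2 (List.nodup_singleton z') (by simpa using hnd.1)

lemma cycle_mono (hIJ : I ⊆ J) {v : V} {es : List E} {vs : List V}
    (h : G.IsCycle I v es vs) : G.IsCycle J v es vs := by
  obtain ⟨⟨h1, h2⟩, h3, h4, h5⟩ := h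
  exact ⟨⟨walk_mono hIJ h1, h2⟩, h3, h4, h5⟩

lemma cycleIn_mono (hIJ : I ⊆ J) {C : Set E} (h : G.IsCycleIn I C) : G.IsCycleIn J C := by
  obtain ⟨v, es, vs, hc, rfl⟩ := h
  exact ⟨v, es, vs, cycle_mono hIJ hc, rfl⟩

lemma cycle_v_mem {v : V} {es : List E} {vs : List V} (h : G.IsCycle I v es vs) : v ∈ vs := by
  obtain ⟨⟨h1, h2⟩, h3, -, -⟩ := h
  have hvs : vs ≠ [] := fun hv => h3 ((walk_nil_iff h1).2 hv)
  rw [List.getLast_cons hvs] at h2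
  rw [← h2]
  exact List.getLast_mem hvs

lemma cycle_verts {v : V} {es : List E} {vs : List V} (h : G.IsCycle I v es vs) :
    G.verts {e | e ∈ es} = {x | x ∈ vs} := by
  obtain ⟨⟨h1, h2⟩, h3, h4, h5⟩ := h
  ext x
  constructor
  · rintro ⟨e, he, hx⟩
    have := walk_inc_subset h1 e he x hx
    rcases List.mem_cons.1 this with rfl | hx'
    · exact cycle_v_mem ⟨⟨h1, h2⟩, h3, h4, h5⟩
    · exact hx'
  · intro hx
    obtain ⟨e, he, hxe⟩ := walk_vs_mem_inc h1 x hx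
    exact ⟨e, he, hxe⟩

lemma cycle_card_verts {v : V} {es : List E} {vs : List V} (h : G.IsCycle I v es vs) :
    (G.verts {e | e ∈ es}).ncard = {e | e ∈ es}.ncard := by
  rw [cycle_verts h, list_set_ncard h.2.2.2, list_set_ncard h.2.2.1,
    walk_length h.1.1]

/-- rotate a cycle to be based at any of its vertices -/
lemma cycle_rotate {v x : V} {es : List E} {vs : List V} (h : G.IsCycle I v es vs)
    (hx : x ∈ vs) :
    ∃ es' vs', G.IsCycle I x es' vs' ∧ es'.Perm es ∧ vs'.Perm vs := by
  obtain ⟨hwf, h3, h4, h5⟩ := h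
  obtain ⟨vs₁, vs₂, rfl⟩ := List.append_of_mem hx
  obtain ⟨es₁, es₂, rfl, hlen, hwf1, hwf2⟩ := walkFrom_split hwf rfl
  have hwf' := walk_append hwf2 hwf1
  have hpv : (vs₂ ++ (vs₁ ++ [x])).Perm (vs₁ ++ x :: vs₂) := by
    have := List.perm_append_comm (l₁ := vs₂) (l₂ := vs₁ ++ [x])
    simpa using this
  have hpe : (es₂ ++ es₁).Perm (es₁ ++ es₂) := List.perm_append_comm
  refine ⟨es₂ ++ es₁, vs₂ ++ (vs₁ ++ [x]), ⟨hwf', ?_, hpe.nodup_iff.2 h4, hpv.nodup_iff.2 h5⟩,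
    hpe, hpv⟩
  intro hn
  rw [List.append_eq_nil_iff] at hn
  exact h3 (by simp [hn.1, hn.2])

end Aux3
namespace Aux4

open Paper Paper.Multigraph Aux Aux2 Aux3

variable {V E : Type*} {G : Multigraph V E} {I J S T : Set E}

lemma mem_verts_of_mem {e : E} {x : V} (he : e ∈ S) (hx : x ∈ G.inc e) : x ∈ G.verts S :=
  ⟨e, he, hx⟩

lemma walk_cross {a : V} {es : List E} {vs : List V}
    (h : G.IsWalk S a es vs) (ha : a ∈ G.verts T) :
    (a :: vs).getLast (by simp) ∈ G.verts T ∨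
      ∃ e ∈ S, e ∉ T ∧ ∃ x ∈ G.inc e, x ∈ G.verts T := by
  induction h with
  | nil => exact Or.inl ha
  | @cons u v e es vs he hinc htail ih =>
    by_cases heT : e ∈ T
    · have hv : v ∈ G.verts T := ⟨e, heT, by rw [hinc]; simp⟩
      rcases ih hv with h1 | h2
      · left; rwa [List.getLast_cons (by simp)]
      · exact Or.inr h2
    · exact Or.inr ⟨e, he, heT, u, by rw [hinc]; simp, ha⟩

/-- in a "connected" set `S`, a proper nonempty part `T` has an outside edge touching it -/
lemma exists_touching (hConn : ∀ x ∈ G.verts S, ∀ y ∈ G.verts S, G.Reachable S x y)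
    (hTS : T ⊆ S) (hvT : (G.verts T).Nonempty) {f : E} (hf : f ∈ S) (hfT : f ∉ T) :
    ∃ e ∈ S, e ∉ T ∧ ∃ x ∈ G.inc e, x ∈ G.verts T := by
  obtain ⟨a, ha⟩ := hvT
  obtain ⟨p, q, hz⟩ := inc_eq G f
  have hp : p ∈ G.verts S := ⟨f, hf, by rw [hz]; simp⟩
  have haS : a ∈ G.verts S := verts_mono hTS ha
  obtain ⟨es, vs, hw, hl⟩ := hConn a haS p hp
  rcases walk_cross hw ha with h1 | h2
  · rw [hl] at h1
    exact ⟨f, hf, hfT, p, by rw [hz]; simp, h1⟩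
  · exact h2

lemma grow_aux (hS : S.Finite)
    (hConn : ∀ x ∈ G.verts S, ∀ y ∈ G.verts S, G.Reachable S x y) :
    ∀ n (T : Set E), T ⊆ S → (G.verts T).Nonempty → (S \ T).ncard = n →
      (G.verts T).ncard < T.ncard → (G.verts S).ncard < S.ncard := by
  intro n
  induction n with
  | zero =>
    intro T hTS hvT hn hlt
    have hd : (S \ T) = ∅ := (Set.ncard_eq_zero (hS.diff (t := T))).1 hn
    have : S = T := subset_antisymm (by intro e he; by_contra heT; exact (Set.eq_empty_iff_forall_notMem.1 hd e) ⟨he, heT⟩) hTS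
    rwa [this]
  | succ n ih =>
    intro T hTS hvT hn hlt
    have hTfin : T.Finite := hS.subset hTS
    have hdne : (S \ T).Nonempty := by
      rw [← Set.ncard_pos (hS.diff (t := T)), hn]; exact Nat.succ_pos n
    obtain ⟨f, hf⟩ := hdne
    obtain ⟨e, heS, heT, x, hxe, hxT⟩ := exists_touching hConn hTS hvT hf.1 hf.2
    obtain ⟨p, q, hz⟩ := inc_eq G e
    set T' : Set E := insert e T with hT'
    have hT'S : T' ⊆ S := Set.insert_subset heS hTS
    have hvT' : G.verts T' ⊆ insert p (insert q (G.verts T)) := by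
      rintro y ⟨g, hg, hyg⟩
      rcases Set.mem_insert_iff.1 hg with rfl | hg
      · rw [hz] at hyg
        rcases Sym2.mem_iff.1 hyg with rfl | rfl
        · exact Set.mem_insert _ _
        · exact Set.mem_insert_of_mem _ (Set.mem_insert _ _)
      · exact Set.mem_insert_of_mem _ (Set.mem_insert_of_mem _ ⟨g, hg, hyg⟩)
    -- x is one of p, q and lies in verts T
    have hx' : insert p (insert q (G.verts T)) ⊆ insert p (G.verts T) ∨
        insert p (insert q (G.verts T)) ⊆ insert q (G.verts T) := by
      rw [hz] at hxe
      rcases Sym2.mem_iff.1 hxe with rfl | rfl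
      · right
        intro y hy
        rcases Set.mem_insert_iff.1 hy with rfl | hy
        · exact Set.mem_insert_of_mem _ hxT
        · exact hy
      · left
        intro y hy
        rcases Set.mem_insert_iff.1 hy with rfl | hy
        · exact Set.mem_insert _ _
        · rcases Set.mem_insert_iff.1 hy with rfl | hy
          · exact Set.mem_insert_of_mem _ hxT
          · exact Set.mem_insert_of_mem _ hy
    have hvTfin : (G.verts T).Finite := verts_finite hTfin
    have hcard' : (G.verts T').ncard ≤ (G.verts T).ncard + 1 := by
      rcases hx' with hsub | hsub
      · exact le_trans (Set.ncard_le_ncard (hvT'.trans hsub) (hvTfin.insert p))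
          (Set.ncard_insert_le _ _)
      · exact le_trans (Set.ncard_le_ncard (hvT'.trans hsub) (hvTfin.insert q))
          (Set.ncard_insert_le _ _)
    have hTcard : T'.ncard = T.ncard + 1 := Set.ncard_insert_of_notMem heT hTfin
    refine ih T' hT'S ⟨x, verts_mono (Set.subset_insert _ _) hxT⟩ ?_ ?_
    · rw [show S \ T' = (S \ T) \ {e} by rw [hT']; ext g; simp; tauto]
      rw [Set.ncard_diff_singleton_of_mem (show e ∈ S \ T from ⟨heS, heT⟩), hn]
      rfl
    · omega
  
lemma grow (hS : S.Finite)
    (hConn : ∀ x ∈ G.verts S, ∀ y ∈ G.verts S, G.Reachable S x y)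
    (hTS : T ⊆ S) (hvT : (G.verts T).Nonempty)
    (hlt : (G.verts T).ncard < T.ncard) : (G.verts S).ncard < S.ncard :=
  grow_aux hS hConn _ T hTS hvT rfl hlt

/-- splitting a disconnected edge set -/
lemma split_disconnected {x0 y0 : V} (hx0 : x0 ∈ G.verts S) (hy0 : y0 ∈ G.verts S)
    (hnr : ¬ G.Reachable S x0 y0) :
    ∃ A B : Set E, A ∪ B = S ∧ A.Nonempty ∧ B.Nonempty ∧ A ∩ B = ∅ ∧
      G.verts A ∩ G.verts B = ∅ := by
  classical
  set A : Set E := {e ∈ S | ∃ a ∈ G.inc e, G.Reachable S x0 a} with hA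
  refine ⟨A, S \ A, Set.union_diff_cancel (Set.sep_subset _ _), ?_, ?_,
    by ext e; simp, ?_⟩
  · obtain ⟨e0, he0, hxe0⟩ := hx0
    exact ⟨e0, he0, x0, hxe0, reach_refl _⟩
  · obtain ⟨f0, hf0, hyf0⟩ := hy0
    refine ⟨f0, hf0, fun hf0A => ?_⟩
    obtain ⟨-, a, ha, hra⟩ := hf0A
    exact hnr (reach_trans hra (reach_of_edge hf0 ha hyf0))
  · ext z
    simp only [Set.mem_inter_iff, Set.mem_empty_iff_false, iff_false, not_and]
    rintro ⟨e, heA, hze⟩ ⟨f, hfB, hzf⟩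
    obtain ⟨heS, a, ha, hra⟩ := heA
    exact hfB.2 ⟨hfB.1, z, hzf, reach_trans hra (reach_of_edge heS ha hze)⟩

lemma bicirc_mono (hSI : S ⊆ I) (h : G.BicircIndep I) : G.BicircIndep S := by
  intro C₁ C₂ h1 h2 ⟨u, w, hu, hw, hr⟩
  exact h C₁ C₂ (cycleIn_mono hSI h1) (cycleIn_mono hSI h2) ⟨u, w, hu, hw, reach_mono hSI hr⟩

/-- every edge of a walk of length ≥ 2 touches an interior vertex -/
lemma edge_touch_interior {u : V} {es : List E} {vs : List V}
    (h : G.IsWalk I u es vs) (hlen : 2 ≤ es.length) :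
    ∀ e ∈ es, ∃ x ∈ G.inc e, x ∈ vs.dropLast := by
  induction h with
  | nil => simp at hlen
  | @cons u v e es vs he hinc htail ih =>
    have hes : es ≠ [] := by
      intro h; rw [h] at hlen; simp at hlen
    have hvs : vs ≠ [] := fun h => hes ((walk_nil_iff htail).2 h)
    have hdl : (v :: vs).dropLast = v :: vs.dropLast := by
      rw [List.dropLast_cons_of_ne_nil hvs]
    intro f hf
    rcases List.mem_cons.1 hf with rfl | hf
    · exact ⟨v, by rw [hinc]; simp, by rw [hdl]; simp⟩
    · by_cases h2 : 2 ≤ es.length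
      · obtain ⟨x, hx1, hx2⟩ := ih h2 f hf
        exact ⟨x, hx1, by rw [hdl]; exact List.mem_cons_of_mem _ hx2⟩
      · -- es has exactly one element, which is f, and v is its endpoint
        have h1 : es.length = 1 := by
          have := List.length_pos_iff.2 hes; omega
        obtain ⟨g, rfl⟩ := List.length_eq_one_iff.1 h1
        have : f = g := by simpa using hf
        subst this
        cases htail with
        | cons hfI hfinc htail' =>
          exact ⟨v, by rw [hfinc]; simp, by rw [hdl]; simp⟩

end Aux4
namespace Aux5

open Paper Paper.Multigraph Aux Aux2 Aux3 Aux4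

variable {V E : Type*} {G : Multigraph V E} {I J S T : Set E}

lemma seg_shared {X : Set V} {estar : E} :
    ∀ n {a c : V} {es : List E} {vs : List V}, es.length = n →
      G.IsWalkFrom I a es vs c → es.Nodup → a ∈ X → c ∈ X → estar ∈ es →
      ∃ (a' c' : V) (es' : List E) (vs' : List V),
        G.IsWalkFrom I a' es' vs' c' ∧ es'.Nodup ∧ (∀ e ∈ es', e ∈ es) ∧
        a' ∈ X ∧ c' ∈ X ∧ estar ∈ es' ∧ (∀ y ∈ vs'.dropLast, y ∉ X) := by
  intro n
  induction n using Nat.strong_induction_on with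
  | _ n ih =>
    intro a c es vs hlen hwf hnd ha hc hstar
    by_cases hint : ∃ y ∈ vs.dropLast, y ∈ X
    · obtain ⟨y, hy, hyX⟩ := hint
      have hvsne : vs ≠ [] := by intro h; rw [h] at hy; simp at hy
      obtain ⟨l1, l2, hdec⟩ := List.append_of_mem hy
      have hvs : vs = l1 ++ y :: (l2 ++ [vs.getLast hvsne]) := by
        conv_lhs => rw [← List.dropLast_append_getLast hvsne]
        rw [hdec]; simp
      obtain ⟨es₁, es₂, rfl, hlen2, hwf1, hwf2⟩ := walkFrom_split hwf hvs
      rw [List.length_append] at hlen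
      have hl1 : es₁.length = l1.length + 1 := by
        have := walk_length hwf1.1; simpa using this
      have hl2 : 1 ≤ es₂.length := by rw [hlen2]; simp
      rw [List.nodup_append] at hnd
      rcases List.mem_append.1 hstar with hst | hst
      · obtain ⟨a', c', es', vs', hw', hnd', hsub', ha', hc', hstar', hint'⟩ :=
          ih es₁.length (by omega) rfl hwf1 hnd.1 ha hyX hst
        exact ⟨a', c', es', vs', hw', hnd', fun e he => List.mem_append.2 (Or.inl (hsub' e he)),
          ha', hc', hstar', hint'⟩
      · obtain ⟨a', c', es', vs', hw', hnd', hsub', ha', hc', hstar', hint'⟩ :=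
          ih es₂.length (by omega) rfl hwf2 hnd.2.1 hyX hc hst
        exact ⟨a', c', es', vs', hw', hnd', fun e he => List.mem_append.2 (Or.inr (hsub' e he)),
          ha', hc', hstar', hint'⟩
    · push_neg at hint
      exact ⟨a, c, es, vs, hwf, hnd, fun e he => he, ha, hc, hstar, hint⟩

lemma seg_link {X Y : Set V} (hdisj : ∀ v ∈ X, v ∉ Y) :
    ∀ n {a c : V} {es : List E} {vs : List V}, es.length = n →
      G.IsWalkFrom I a es vs c → es.Nodup → a ∈ X → c ∈ Y →
      ∃ (a' c' : V) (es' : List E) (vs' : List V),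
        G.IsWalkFrom I a' es' vs' c' ∧ es'.Nodup ∧ (∀ e ∈ es', e ∈ es) ∧
        a' ∈ X ∧ c' ∈ Y ∧ es' ≠ [] ∧ (∀ y ∈ vs'.dropLast, y ∉ X ∧ y ∉ Y) := by
  intro n
  induction n using Nat.strong_induction_on with
  | _ n ih =>
    intro a c es vs hlen hwf hnd ha hc
    by_cases hint : ∃ y ∈ vs.dropLast, y ∈ X ∨ y ∈ Y
    · obtain ⟨y, hy, hyXY⟩ := hint
      have hvsne : vs ≠ [] := by intro h; rw [h] at hy; simp at hy
      obtain ⟨l1, l2, hdec⟩ := List.append_of_mem hy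
      have hvs : vs = l1 ++ y :: (l2 ++ [vs.getLast hvsne]) := by
        conv_lhs => rw [← List.dropLast_append_getLast hvsne]
        rw [hdec]; simp
      obtain ⟨es₁, es₂, rfl, hlen2, hwf1, hwf2⟩ := walkFrom_split hwf hvs
      rw [List.length_append] at hlen
      have hl1 : es₁.length = l1.length + 1 := by
        have := walk_length hwf1.1; simpa using this
      have hl2 : 1 ≤ es₂.length := by rw [hlen2]; simp
      rw [List.nodup_append] at hnd
      rcases hyXY with hyX | hyY
      · obtain ⟨a', c', es', vs', hw', hnd', hsub', ha', hc', hne', hint'⟩ :=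
          ih es₂.length (by omega) rfl hwf2 hnd.2.1 hyX hc
        exact ⟨a', c', es', vs', hw', hnd', fun e he => List.mem_append.2 (Or.inr (hsub' e he)),
          ha', hc', hne', hint'⟩
      · obtain ⟨a', c', es', vs', hw', hnd', hsub', ha', hc', hne', hint'⟩ :=
          ih es₁.length (by omega) rfl hwf1 hnd.1 ha hyY
        exact ⟨a', c', es', vs', hw', hnd', fun e he => List.mem_append.2 (Or.inl (hsub' e he)),
          ha', hc', hne', hint'⟩
    · push_neg at hint
      refine ⟨a, c, es, vs, hwf, hnd, fun e he => he, ha, hc, ?_, hint⟩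
      intro hes
      have hvs : vs = [] := (walk_nil_iff hwf.1).1 hes
      have : a = c := by
        have := hwf.2
        rw [hvs] at this
        simpa using this
      subst this
      exact hdisj a ha hc
end Aux5
namespace Aux6

open Paper Paper.Multigraph Aux Aux2 Aux3 Aux4 Aux5

variable {V E : Type*} {G : Multigraph V E} {I J S T : Set E}

lemma walkFrom_self {u w : V} {es : List E} {vs : List V} (h : G.IsWalkFrom I u es vs w) :
    G.IsWalkFrom {e | e ∈ es} u es vs w := ⟨walk_self h.1, h.2⟩

lemma walkFrom_mono (hIJ : I ⊆ J) {u w : V} {es : List E} {vs : List V}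
    (h : G.IsWalkFrom I u es vs w) : G.IsWalkFrom J u es vs w := ⟨walk_mono hIJ h.1, h.2⟩

lemma cycleIn_subset {C : Set E} (h : G.IsCycleIn I C) : C ⊆ I := by
  obtain ⟨v, es, vs, hc, rfl⟩ := h
  exact fun e he => walk_edges_mem hc.1.1 e he

lemma cycleIn_finite {C : Set E} (h : G.IsCycleIn I C) : C.Finite := by
  obtain ⟨v, es, vs, hc, rfl⟩ := h
  exact list_set_finite es

lemma cycleIn_card_verts {C : Set E} (h : G.IsCycleIn I C) :
    (G.verts C).ncard = C.ncard := by
  obtain ⟨v, es, vs, hc, rfl⟩ := h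
  exact cycle_card_verts hc

lemma cycleIn_verts_nonempty {C : Set E} (h : G.IsCycleIn I C) : (G.verts C).Nonempty := by
  obtain ⟨v, es, vs, hc, rfl⟩ := h
  rw [cycle_verts hc]
  exact ⟨v, cycle_v_mem hc⟩

/-- all vertices of a cycle are mutually reachable within the cycle -/
lemma cycle_conn {C : Set E} (h : G.IsCycleIn I C) :
    ∀ x ∈ G.verts C, ∀ y ∈ G.verts C, G.Reachable C x y := by
  obtain ⟨v, es, vs, hc, rfl⟩ := h
  intro x hx y hy
  have hwf : G.IsWalkFrom {e | e ∈ es} v es vs v := walkFrom_self hc.1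
  rw [cycle_verts hc] at hx hy
  exact reach_trans (reach_end_of_mem hwf (List.mem_cons_of_mem _ hx))
    (reach_start_of_mem hwf (List.mem_cons_of_mem _ hy))

/-- connectivity of `C₁ ∪ C₂ ∪ P` -/
lemma conn_assemble {C₁ C₂ : Set E} {u w : V} {esP : List E} {vsP : List V}
    (h1 : G.IsCycleIn I C₁) (h2 : G.IsCycleIn I C₂)
    (hu : u ∈ G.verts C₁) (hw : w ∈ G.verts C₂)
    (hP : G.IsWalkFrom I u esP vsP w) :
    ∀ x ∈ G.verts (C₁ ∪ C₂ ∪ {e | e ∈ esP}), ∀ y ∈ G.verts (C₁ ∪ C₂ ∪ {e | e ∈ esP}),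
      G.Reachable (C₁ ∪ C₂ ∪ {e | e ∈ esP}) x y := by
  set S := C₁ ∪ C₂ ∪ {e | e ∈ esP} with hSdef
  have hC1S : C₁ ⊆ S := fun e he => Or.inl (Or.inl he)
  have hC2S : C₂ ⊆ S := fun e he => Or.inl (Or.inr he)
  have hPS : {e | e ∈ esP} ⊆ S := fun e he => Or.inr he
  have hPwf : G.IsWalkFrom {e | e ∈ esP} u esP vsP w := walkFrom_self hP
  have huw : G.Reachable S u w := reach_mono hPS ⟨_, _, hPwf⟩
  have key : ∀ x ∈ G.verts S, G.Reachable S x w := by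
    intro x hx
    rw [hSdef, verts_union, verts_union] at hx
    rcases hx with (hx | hx) | hx
    · exact reach_trans (reach_mono hC1S (cycle_conn h1 x hx u hu)) huw
    · exact reach_mono hC2S (cycle_conn h2 x hx w hw)
    · -- x is an endpoint of a path edge
      obtain ⟨e, he, hxe⟩ := hx
      have hmem : x ∈ u :: vsP := walk_inc_subset hP.1 e he x hxe
      exact reach_mono hPS (reach_end_of_mem hPwf hmem)
  intro x hx y hy
  exact reach_trans (key x hx) (reach_symm (key y hy))

lemma list_set_ncard_le {α : Type*} (l : List α) : {x | x ∈ l}.ncard ≤ l.length := by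
  classical
  have : {x | x ∈ l} = (l.toFinset : Set α) := by ext x; simp
  rw [this, Set.ncard_coe_finset]
  exact List.toFinset_card_le l

/-- Main excess lemma: two distinct cycles in the same component give an edge set
with more edges than vertices. -/
lemma excess_main {C₁ C₂ : Set E} {u w : V}
    (h1 : G.IsCycleIn I C₁) (h2 : G.IsCycleIn I C₂)
    (hst : ∃ e, e ∈ C₂ ∧ e ∉ C₁)
    (hu : u ∈ G.verts C₁) (hw : w ∈ G.verts C₂) (hr : G.Reachable I u w) :
    ∃ S, S ⊆ I ∧ S.Finite ∧ (G.verts S).ncard < S.ncard := by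
  classical
  obtain ⟨esW, vsW, hW⟩ := hr
  obtain ⟨esP, vsP, hPwf, hPnd⟩ := walk_to_path hW
  set S := C₁ ∪ C₂ ∪ {e | e ∈ esP} with hSdef
  have hC1S : C₁ ⊆ S := fun e he => Or.inl (Or.inl he)
  have hC2S : C₂ ⊆ S := fun e he => Or.inl (Or.inr he)
  have hPS : {e | e ∈ esP} ⊆ S := fun e he => Or.inr he
  have hSI : S ⊆ I := by
    rintro e ((he | he) | he)
    · exact cycleIn_subset h1 he
    · exact cycleIn_subset h2 he
    · exact walk_edges_mem hPwf.1 e he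
  have hSfin : S.Finite := ((cycleIn_finite h1).union (cycleIn_finite h2)).union
    (list_set_finite esP)
  have hconn := conn_assemble h1 h2 hu hw hPwf
  have hC1fin : C₁.Finite := cycleIn_finite h1
  have hC2fin : C₂.Finite := cycleIn_finite h2
  have hvC1 : (G.verts C₁).ncard = C₁.ncard := cycleIn_card_verts h1
  have hvC2 : (G.verts C₂).ncard = C₂.ncard := cycleIn_card_verts h2
  have hedge_vert : ∀ (C : Set E) (e : E), e ∈ C → ∀ x ∈ G.inc e, x ∈ G.verts C :=
    fun C e he x hx => ⟨e, he, hx⟩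
  refine ⟨S, hSI, hSfin, ?_⟩
  rcases Set.eq_empty_or_nonempty (G.verts C₁ ∩ G.verts C₂) with hdisj | hsh
  · -- vertex-disjoint case
    have hdisj' : ∀ v ∈ G.verts C₁, v ∉ G.verts C₂ := by
      intro v hv hv2
      exact absurd (Set.mem_inter hv hv2) (by rw [hdisj]; exact id)
    obtain ⟨a', c', es', vs', hw', hnd', hsub', ha', hc', hne', hint'⟩ :=
      seg_link hdisj' esP.length rfl hPwf (path_edges_nodup hPwf.1 hPnd) hu hw
    -- edges of the segment avoid both cycles
    have hseg_out : ∀ e ∈ es', e ∉ C₁ ∧ e ∉ C₂ := by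
      intro e he
      by_cases hlen2 : 2 ≤ es'.length
      · obtain ⟨x, hx1, hx2⟩ := edge_touch_interior hw'.1 hlen2 e he
        exact ⟨fun hC => (hint' x hx2).1 (hedge_vert _ _ hC x hx1),
          fun hC => (hint' x hx2).2 (hedge_vert _ _ hC x hx1)⟩
      · have h1' : es'.length = 1 := by
          have := List.length_pos_iff.2 hne'; omega
        obtain ⟨g, rfl⟩ := List.length_eq_one_iff.1 h1'
        have : e = g := by simpa using he
        subst this
        cases hw'.1 with
        | cons heI hinc htail =>
          cases htail with
          | nil =>
            have hc'' : c' ∈ G.inc e := by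
              have := hw'.2
              simp at this
              subst this
              rw [hinc]; simp
            have ha'' : a' ∈ G.inc e := by rw [hinc]; simp
            exact ⟨fun hC => hdisj' c' (hedge_vert _ _ hC c' hc'') hc',
              fun hC => hdisj' a' ha' (hedge_vert _ _ hC a' ha'')⟩
    have hC12 : C₁ ∩ C₂ = ∅ := by
      ext e
      simp only [Set.mem_inter_iff, Set.mem_empty_iff_false, iff_false, not_and]
      intro he1 he2
      obtain ⟨p, q, hz⟩ := inc_eq G e
      exact hdisj' p (hedge_vert _ _ he1 p (by rw [hz]; simp))
        (hedge_vert _ _ he2 p (by rw [hz]; simp))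
    set Q : Set E := {e | e ∈ es'} with hQ
    set T : Set E := C₁ ∪ C₂ ∪ Q with hT
    have hTS : T ⊆ S := by
      rintro e ((he | he) | he)
      · exact hC1S he
      · exact hC2S he
      · exact hPS (hsub' e he)
    have hQfin : Q.Finite := list_set_finite es'
    have hQcard : Q.ncard = es'.length := list_set_ncard hnd'
    have hTcard : T.ncard = C₁.ncard + C₂.ncard + es'.length := by
      rw [hT, Set.ncard_union_eq ?d1 (hC1fin.union hC2fin) hQfin,
        Set.ncard_union_eq ?d2 hC1fin hC2fin, hQcard]
      case d1 =>
        rw [Set.disjoint_left]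
        rintro e (he | he) heQ
        · exact (hseg_out e heQ).1 he
        · exact (hseg_out e heQ).2 he
      case d2 =>
        rw [Set.disjoint_iff_inter_eq_empty]
        exact hC12
    -- vertex bound
    have hvs'ne : vs' ≠ [] := fun h => hne' ((walk_nil_iff hw'.1).2 h)
    have hlast : vs'.getLast hvs'ne = c' := by
      have := hw'.2
      rwa [List.getLast_cons hvs'ne] at this
    have hvT : G.verts T ⊆ (G.verts C₁ ∪ G.verts C₂) ∪ {x | x ∈ vs'.dropLast} := by
      rw [hT, verts_union, verts_union]
      rintro x ((hx | hx) | hx)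
      · exact Or.inl (Or.inl hx)
      · exact Or.inl (Or.inr hx)
      · obtain ⟨e, he, hxe⟩ := hx
        have hmem : x ∈ a' :: vs' := walk_inc_subset hw'.1 e he x hxe
        rcases List.mem_cons.1 hmem with rfl | hmem
        · exact Or.inl (Or.inl ha')
        · conv at hmem => rw [← List.dropLast_append_getLast hvs'ne]
          rcases List.mem_append.1 hmem with hmem | hmem
          · exact Or.inr hmem
          · rw [hlast] at hmem
            rcases List.mem_singleton.1 hmem with rfl
            exact Or.inl (Or.inr hc')
    have hvTcard : (G.verts T).ncard ≤ C₁.ncard + C₂.ncard + (es'.length - 1) := by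
      have h1 : (G.verts T).ncard ≤ ((G.verts C₁ ∪ G.verts C₂) ∪ {x | x ∈ vs'.dropLast}).ncard :=
        Set.ncard_le_ncard hvT (((verts_finite hC1fin).union (verts_finite hC2fin)).union
          (list_set_finite _))
      have h2 : ((G.verts C₁ ∪ G.verts C₂) ∪ {x | x ∈ vs'.dropLast}).ncard ≤
          (G.verts C₁ ∪ G.verts C₂).ncard + {x | x ∈ vs'.dropLast}.ncard :=
        Set.ncard_union_le _ _
      have h3 : (G.verts C₁ ∪ G.verts C₂).ncard = C₁.ncard + C₂.ncard := by
        rw [Set.ncard_union_eq (Set.disjoint_iff_inter_eq_empty.2 hdisj)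
          (verts_finite hC1fin) (verts_finite hC2fin), hvC1, hvC2]
      have h4 : {x | x ∈ vs'.dropLast}.ncard ≤ es'.length - 1 := by
        refine le_trans (list_set_ncard_le _) ?_
        rw [List.length_dropLast, ← walk_length hw'.1]
      omega
    have hlen1 : 1 ≤ es'.length := List.length_pos_iff.2 hne'
    have hvT_lt : (G.verts T).ncard < T.ncard := by omega
    exact grow hSfin hconn hTS ((cycleIn_verts_nonempty h1).mono (verts_mono (by
      rintro e he; exact Or.inl (Or.inl he)))) hvT_lt
  · -- shared vertex case
    obtain ⟨xb, hxb1, hxb2⟩ := hsh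
    obtain ⟨estar, hstar2, hstar1⟩ := hst
    obtain ⟨v₂, es₂, vs₂, hc₂, hC2eq⟩ := h2
    have hxbvs : xb ∈ vs₂ := by
      rw [hC2eq] at hxb2
      rwa [cycle_verts hc₂] at hxb2
    obtain ⟨es₂', vs₂', hc₂', hpe, hpv⟩ := cycle_rotate hc₂ hxbvs
    have hC2eq' : C₂ = {e | e ∈ es₂'} := by
      rw [hC2eq]; ext e; simp [hpe.mem_iff]
    have hstar2' : estar ∈ es₂' := by
      rw [hC2eq'] at hstar2; exact hstar2
    obtain ⟨hwf₂, hne₂, hnd₂, hndv₂⟩ := hc₂'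
    obtain ⟨a', c', es', vs', hw', hnd', hsub', ha', hc', hstar', hint'⟩ :=
      seg_shared (X := G.verts C₁) es₂'.length rfl hwf₂ hnd₂ hxb1 hxb1 hstar2'
    have hne' : es' ≠ [] := fun h => by rw [h] at hstar'; exact absurd hstar' (by simp)
    have hseg_out : ∀ e ∈ es', e ∉ C₁ := by
      intro e he
      by_cases hlen2 : 2 ≤ es'.length
      · obtain ⟨x, hx1, hx2⟩ := edge_touch_interior hw'.1 hlen2 e he
        exact fun hC => (hint' x hx2) (hedge_vert _ _ hC x hx1)
      · have h1' : es'.length = 1 := by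
          have := List.length_pos_iff.2 hne'; omega
        obtain ⟨g, rfl⟩ := List.length_eq_one_iff.1 h1'
        have : e = g := by simpa using he
        subst this
        have : estar = e := by simpa using hstar'
        subst this
        exact hstar1
    set Q : Set E := {e | e ∈ es'} with hQ
    set T : Set E := C₁ ∪ Q with hT
    have hTS : T ⊆ S := by
      rintro e (he | he)
      · exact hC1S he
      · refine hC2S ?_
        rw [hC2eq']
        exact hsub' e he
    have hQfin : Q.Finite := list_set_finite es'
    have hQcard : Q.ncard = es'.length := list_set_ncard hnd'
    have hTcard : T.ncard = C₁.ncard + es'.length := by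
      rw [hT, Set.ncard_union_eq ?d1 hC1fin hQfin, hQcard]
      case d1 =>
        rw [Set.disjoint_left]
        intro e he heQ
        exact hseg_out e heQ he
    have hvs'ne : vs' ≠ [] := fun h => hne' ((walk_nil_iff hw'.1).2 h)
    have hlast : vs'.getLast hvs'ne = c' := by
      have := hw'.2
      rwa [List.getLast_cons hvs'ne] at this
    have hvT : G.verts T ⊆ G.verts C₁ ∪ {x | x ∈ vs'.dropLast} := by
      rw [hT, verts_union]
      rintro x (hx | hx)
      · exact Or.inl hx
      · obtain ⟨e, he, hxe⟩ := hx
        have hmem : x ∈ a' :: vs' := walk_inc_subset hw'.1 e he x hxe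
        rcases List.mem_cons.1 hmem with rfl | hmem
        · exact Or.inl ha'
        · conv at hmem => rw [← List.dropLast_append_getLast hvs'ne]
          rcases List.mem_append.1 hmem with hmem | hmem
          · exact Or.inr hmem
          · rw [hlast] at hmem
            rcases List.mem_singleton.1 hmem with rfl
            exact Or.inl hc'
    have hvTcard : (G.verts T).ncard ≤ C₁.ncard + (es'.length - 1) := by
      have h1 : (G.verts T).ncard ≤ (G.verts C₁ ∪ {x | x ∈ vs'.dropLast}).ncard :=
        Set.ncard_le_ncard hvT ((verts_finite hC1fin).union (list_set_finite _))
      have h2 : (G.verts C₁ ∪ {x | x ∈ vs'.dropLast}).ncard ≤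
          (G.verts C₁).ncard + {x | x ∈ vs'.dropLast}.ncard := Set.ncard_union_le _ _
      have h4 : {x | x ∈ vs'.dropLast}.ncard ≤ es'.length - 1 := by
        refine le_trans (list_set_ncard_le _) ?_
        rw [List.length_dropLast, ← walk_length hw'.1]
      omega
    have hlen1 : 1 ≤ es'.length := List.length_pos_iff.2 hne'
    have hvT_lt : (G.verts T).ncard < T.ncard := by omega
    exact grow hSfin hconn hTS ((cycleIn_verts_nonempty h1).mono (verts_mono (by
      rintro e he; exact Or.inl he))) hvT_lt

lemma hall_to_bicirc
    (hhall : ∀ S ⊆ I, S.Finite → S.ncard ≤ (G.verts S).ncard) : G.BicircIndep I := by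
  intro C₁ C₂ h1 h2 ⟨u, w, hu, hw, hr⟩
  by_contra hne
  have hmain : ∃ S, S ⊆ I ∧ S.Finite ∧ (G.verts S).ncard < S.ncard := by
    by_cases hC : ∃ e, e ∈ C₂ ∧ e ∉ C₁
    · exact excess_main h1 h2 hC hu hw hr
    · push_neg at hC
      have hC' : ∃ e, e ∈ C₁ ∧ e ∉ C₂ := by
        by_contra hC'
        push_neg at hC'
        exact hne (subset_antisymm hC' hC)
      exact excess_main h2 h1 hC' hw hu (reach_symm hr)
  obtain ⟨S, hSI, hSfin, hlt⟩ := hmain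
  exact absurd (hhall S hSI hSfin) (by omega)

end Aux6
namespace Aux7

open Paper Paper.Multigraph Aux Aux2 Aux3 Aux4 Aux5 Aux6

variable {V E : Type*} {G : Multigraph V E} {I J S T : Set E}

/-- in a path, only one edge can be incident to the final vertex -/
lemma path_end_edge {u z : V} {es : List E} {vs : List V} (h : G.IsWalk I u es vs)
    (hnd : (u :: vs).Nodup) (hz : (u :: vs).getLast (by simp) = z) :
    ∀ e ∈ es, z ∈ G.inc e → ∀ f ∈ es, z ∈ G.inc f → e = f := by
  induction h with
  | nil => simp
  | @cons u v e es vs he hinc htail ih =>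
    have hz' : (v :: vs).getLast (by simp) = z := by
      rw [List.getLast_cons (by simp)] at hz; exact hz
    rw [List.nodup_cons] at hnd
    by_cases hes : es = []
    · subst hes
      have hvs : vs = [] := (walk_nil_iff htail).1 rfl
      subst hvs
      intro e' he' hze' f hf hzf
      simp only [List.mem_singleton] at he' hf
      rw [he', hf]
    · have hvs : vs ≠ [] := fun hh => hes ((walk_nil_iff htail).2 hh)
      have hhead : z ∉ G.inc e := by
        rw [hinc]
        intro hmem
        rcases Sym2.mem_iff.1 hmem with rfl | rfl
        · exact hnd.1 (hz' ▸ List.getLast_mem (by simp))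
        · have hv : z ∈ vs := by
            rw [List.getLast_cons hvs] at hz'
            exact hz' ▸ List.getLast_mem hvs
          exact (List.nodup_cons.1 hnd.2).1 hv
      intro e' he' hze' f hf hzf
      rcases List.mem_cons.1 he' with rfl | he'
      · exact absurd hze' hhead
      rcases List.mem_cons.1 hf with rfl | hf
      · exact absurd hzf hhead
      exact ih hnd.2 hz' e' he' hze' f hf hzf

/-- every vertex of a "min-degree ≥ 2" finite edge set lies near a cycle -/
lemma step1 (hSfin : S.Finite) {y0 : V} (hy0 : y0 ∈ G.verts S)
    (hnp : ∀ x (e0 : E), e0 ∈ S → x ∈ G.inc e0 → G.inc e0 ≠ s(x, x) →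
      ∃ f ∈ S, x ∈ G.inc f ∧ f ≠ e0) :
    ∃ v es vs, G.IsCycle S v es vs := by
  classical
  set L : Set ℕ := {n | ∃ w es vs, G.IsPath S y0 es vs w ∧ es.length = n} with hL
  have h0 : 0 ∈ L := ⟨y0, [], [], ⟨walkFrom_nil _, by simp⟩, rfl⟩
  have vert_of_mem : ∀ {w : V} {es : List E} {vs : List V}, G.IsPath S y0 es vs w →
      ∀ x ∈ y0 :: vs, x ∈ G.verts S := by
    intro w es vs hp x hx
    rcases List.mem_cons.1 hx with rfl | hx
    · exact hy0
    · obtain ⟨e, he, hxe⟩ := walk_vs_mem_inc hp.1.1 x hx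
      exact ⟨e, walk_edges_mem hp.1.1 e he, hxe⟩
  have hbdd : BddAbove L := by
    refine ⟨(G.verts S).ncard, ?_⟩
    rintro n ⟨w, es, vs, hp, rfl⟩
    have hcard : (y0 :: vs).toFinset.card ≤ (verts_finite (G := G) hSfin).toFinset.card := by
      apply Finset.card_le_card
      intro x hx
      rw [Set.Finite.mem_toFinset]
      exact vert_of_mem hp x (List.mem_toFinset.1 hx)
    rw [List.toFinset_card_of_nodup hp.2, ← Set.ncard_eq_toFinset_card _ (verts_finite (G := G) hSfin)]
      at hcard
    have := walk_length hp.1.1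
    simp only [List.length_cons] at hcard
    omega
  have hmem := Nat.sSup_mem ⟨0, h0⟩ hbdd
  obtain ⟨z, es, vs, hp, hlen⟩ := hmem
  have hzmem : z ∈ y0 :: vs := hp.1.2 ▸ List.getLast_mem (by simp)
  have hzS : z ∈ G.verts S := vert_of_mem hp z hzmem
  by_cases hloop : ∃ e ∈ S, G.inc e = s(z, z)
  · obtain ⟨e, heS, hinc⟩ := hloop
    exact ⟨z, [e], [z], ⟨IsWalk.cons heS hinc (IsWalk.nil _), by simp⟩, by simp, by simp, by simp⟩
  · push_neg at hloop
    obtain ⟨e1, he1S, hze1⟩ := hzS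
    obtain ⟨e, heS, hze, hne1⟩ := hnp z e1 he1S hze1 (hloop e1 he1S)
    have huniq := path_end_edge hp.1.1 hp.2 hp.1.2
    have hout : ∃ g ∈ S, z ∈ G.inc g ∧ g ∉ es := by
      by_cases h1 : e1 ∈ es
      · by_cases h2 : e ∈ es
        · exact absurd (huniq e h2 hze e1 h1 hze1) hne1
        · exact ⟨e, heS, hze, h2⟩
      · exact ⟨e1, he1S, hze1, h1⟩
    obtain ⟨g, hgS, hzg, hgout⟩ := hout
    obtain ⟨p, q, hz2⟩ := inc_eq G g
    have hexz : ∃ z'', G.inc g = s(z, z'') := by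
      rw [hz2] at hzg ⊢
      rcases Sym2.mem_iff.1 hzg with rfl | rfl
      · exact ⟨q, rfl⟩
      · exact ⟨p, Sym2.eq_swap⟩
    obtain ⟨z'', hincg⟩ := hexz
    by_cases hzin : z'' ∈ y0 :: vs
    · rcases List.mem_cons.1 hzin with rfl | hzin
      · exact ⟨z'', _, _, splice_cycle hp hgS hgout hincg⟩
      · obtain ⟨vs₁, vs₂, rfl⟩ := List.append_of_mem hzin
        obtain ⟨es₁, es₂, rfl, hl2, hwf1, hwf2⟩ := walkFrom_split hp.1 rfl
        have hnd2 : (z'' :: vs₂).Nodup := by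
          have hsl : (z'' :: vs₂).Sublist (y0 :: (vs₁ ++ z'' :: vs₂)) :=
            List.Sublist.cons _ (List.sublist_append_right vs₁ (z'' :: vs₂))
          exact hsl.nodup hp.2
        exact ⟨z'', _, _, splice_cycle ⟨hwf2, hnd2⟩ hgS
          (fun hh => hgout (List.mem_append.2 (Or.inr hh))) hincg⟩
    · exfalso
      have hext : G.IsPath S y0 (es ++ [g]) (vs ++ [z'']) z'' := by
        constructor
        · exact walk_append hp.1 (walk_single hgS hincg)
        · rw [show y0 :: (vs ++ [z'']) = (y0 :: vs) ++ [z''] by simp]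
          refine List.Nodup.append hp.2 (by simp) ?_
          intro a ha hb
          simp only [List.mem_singleton] at hb
          subst hb
          exact hzin ha
      have hmem' : es.length + 1 ∈ L := ⟨z'', _, _, hext, by simp⟩
      have hle := le_csSup hbdd hmem'
      omega

/-- THM-A: a finite nonempty edge set with at least as many edges as vertices
contains a cycle. -/
lemma thmA : ∀ n (S : Set E), S.Finite → S.ncard = n → S.Nonempty →
    (G.verts S).ncard ≤ S.ncard → ∃ v es vs, G.IsCycle S v es vs := by
  intro n
  induction n using Nat.strong_induction_on with
  | _ n ih =>
    intro S hSfin hcard hne hle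
    by_cases hpend : ∃ (x : V) (e0 : E), e0 ∈ S ∧ x ∈ G.inc e0 ∧ G.inc e0 ≠ s(x, x) ∧
        ∀ f ∈ S, x ∈ G.inc f → f = e0
    · obtain ⟨x, e0, he0S, hxe0, hnl, huni⟩ := hpend
      set S' := S \ {e0} with hS'
      have hS'fin : S'.Finite := hSfin.diff
      have hxS : x ∈ G.verts S := ⟨e0, he0S, hxe0⟩
      rcases Set.eq_empty_or_nonempty S' with hS'e | hS'ne
      · -- S = {e0}, a single non-loop: 2 vertices, 1 edge, contradiction
        exfalso
        have hSeq : S = {e0} := by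
          apply subset_antisymm
          · intro f hf
            by_contra hf0
            exact (Set.eq_empty_iff_forall_notMem.1 hS'e f) ⟨hf, hf0⟩
          · intro f hf
            rw [Set.mem_singleton_iff] at hf
            rw [hf]; exact he0S
        obtain ⟨p, q, hz⟩ := inc_eq G e0
        have hpq : p ≠ q := by
          intro hh
          rw [hh] at hz
          rw [hz] at hxe0
          rcases Sym2.mem_iff.1 hxe0 with rfl | rfl <;> exact hnl (by rw [hz])
        have hverts : G.verts S = {p, q} := by
          ext y
          constructor
          · rintro ⟨f, hf, hyf⟩
            rw [hSeq, Set.mem_singleton_iff] at hf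
            subst hf
            rw [hz] at hyf
            rcases Sym2.mem_iff.1 hyf with rfl | rfl
            · exact Or.inl rfl
            · exact Or.inr rfl
          · rintro (rfl | rfl)
            · exact ⟨e0, he0S, by rw [hz]; simp⟩
            · exact ⟨e0, he0S, by rw [hz]; simp⟩
        rw [hverts, hSeq, Set.ncard_pair hpq, Set.ncard_singleton] at hle
        omega
      · have hxS' : x ∉ G.verts S' := by
          rintro ⟨f, hf, hxf⟩
          exact hf.2 (huni f hf.1 hxf)
        have hsub : G.verts S' ⊆ G.verts S \ {x} := by
          intro y hy
          refine ⟨verts_mono (Set.diff_subset) hy, ?_⟩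
          intro hh
          rw [Set.mem_singleton_iff] at hh
          subst hh
          exact hxS' hy
        have hvcard : (G.verts S').ncard ≤ (G.verts S).ncard - 1 := by
          have h1 : (G.verts S').ncard ≤ (G.verts S \ {x}).ncard :=
            Set.ncard_le_ncard hsub ((verts_finite hSfin).diff)
          rw [Set.ncard_diff_singleton_of_mem hxS] at h1
          exact h1
        have hScard : S'.ncard = S.ncard - 1 :=
          Set.ncard_diff_singleton_of_mem he0S
        have hvSpos : 1 ≤ (G.verts S).ncard :=
          (Set.ncard_pos (verts_finite hSfin)).2 ⟨x, hxS⟩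
        have hSpos : 1 ≤ S.ncard := (Set.ncard_pos hSfin).2 hne
        obtain ⟨v, es, vs, hc⟩ := ih S'.ncard (by omega) S' hS'fin rfl hS'ne (by omega)
        exact ⟨v, es, vs, cycle_mono (Set.diff_subset) hc⟩
    · push_neg at hpend
      obtain ⟨e0, he0⟩ := hne
      obtain ⟨p, q, hz⟩ := inc_eq G e0
      have hy0 : p ∈ G.verts S := ⟨e0, he0, by rw [hz]; simp⟩
      exact step1 hSfin hy0 fun x e heS hxe hnl => hpend x e heS hxe hnl

/-- Core counting: a bicircular-independent finite edge set has at most as many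
edges as vertices. -/
lemma core : ∀ n (S : Set E), S.Finite → S.ncard = n → G.BicircIndep S →
    S.ncard ≤ (G.verts S).ncard := by
  intro n
  induction n using Nat.strong_induction_on with
  | _ n ih =>
    intro S hSfin hcard hbi
    rcases Set.eq_empty_or_nonempty S with rfl | hne
    · simp
    by_cases hconn : ∀ x ∈ G.verts S, ∀ y ∈ G.verts S, G.Reachable S x y
    · -- connected case
      by_contra hlt
      push_neg at hlt
      have hSpos : 1 ≤ S.ncard := (Set.ncard_pos hSfin).2 hne
      obtain ⟨v₁, es₁, vs₁, hc₁⟩ := thmA (G := G) S.ncard S hSfin rfl hne (by omega)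
      have hes₁ne := hc₁.2.1
      obtain ⟨ec, hec⟩ := List.exists_mem_of_ne_nil es₁ hes₁ne
      have hecS : ec ∈ S := walk_edges_mem hc₁.1.1 ec hec
      set S' := S \ {ec} with hS'
      have hS'fin : S'.Finite := hSfin.diff
      have hS'card : S'.ncard = S.ncard - 1 :=
        Set.ncard_diff_singleton_of_mem hecS
      have hvS' : (G.verts S').ncard ≤ (G.verts S).ncard :=
        Set.ncard_le_ncard (verts_mono Set.diff_subset) (verts_finite hSfin)
      have hS'ne : S'.Nonempty := by
        rw [← Set.ncard_pos hS'fin]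
        have hvpos : 1 ≤ (G.verts S).ncard := by
          obtain ⟨p, q, hz⟩ := inc_eq G ec
          exact (Set.ncard_pos (verts_finite hSfin)).2
            ⟨p, ec, hecS, by rw [hz]; simp⟩
        omega
      obtain ⟨v₂, es₂, vs₂, hc₂⟩ := thmA (G := G) S'.ncard S' hS'fin rfl hS'ne (by omega)
      -- two distinct cycles in the same connected set: contradiction
      have hC₁ : G.IsCycleIn S {e | e ∈ es₁} := ⟨v₁, es₁, vs₁, hc₁, rfl⟩
      have hC₂ : G.IsCycleIn S {e | e ∈ es₂} :=
        ⟨v₂, es₂, vs₂, cycle_mono Set.diff_subset hc₂, rfl⟩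
      have hv₁ : v₁ ∈ G.verts {e | e ∈ es₁} := by
        rw [cycle_verts hc₁]; exact cycle_v_mem hc₁
      have hv₂ : v₂ ∈ G.verts {e | e ∈ es₂} := by
        rw [cycle_verts hc₂]; exact cycle_v_mem hc₂
      have hv₁S : v₁ ∈ G.verts S := by
        obtain ⟨e, he, hv⟩ := hv₁
        exact ⟨e, walk_edges_mem hc₁.1.1 e he, hv⟩
      have hv₂S : v₂ ∈ G.verts S := by
        obtain ⟨e, he, hv⟩ := hv₂
        exact ⟨e, (walk_edges_mem hc₂.1.1 e he).1, hv⟩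
      have heq := hbi _ _ hC₁ hC₂ ⟨v₁, v₂, hv₁, hv₂, hconn v₁ hv₁S v₂ hv₂S⟩
      have hec₂ : ec ∈ {e | e ∈ es₂} := heq ▸ hec
      exact (walk_edges_mem hc₂.1.1 ec hec₂).2 rfl
    · -- disconnected case: split
      push_neg at hconn
      obtain ⟨x0, hx0, y0, hy0, hnr⟩ := hconn
      obtain ⟨A, B, hAB, hAne, hBne, hABdisj, hvdisj⟩ := split_disconnected hx0 hy0 hnr
      have hAS : A ⊆ S := hAB ▸ Set.subset_union_left
      have hBS : B ⊆ S := hAB ▸ Set.subset_union_right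
      have hAfin : A.Finite := hSfin.subset hAS
      have hBfin : B.Finite := hSfin.subset hBS
      have hcardS : S.ncard = A.ncard + B.ncard := by
        rw [← hAB, Set.ncard_union_eq (Set.disjoint_iff_inter_eq_empty.2 hABdisj) hAfin hBfin]
      have hvertsS : (G.verts S).ncard = (G.verts A).ncard + (G.verts B).ncard := by
        rw [← hAB, verts_union,
          Set.ncard_union_eq (Set.disjoint_iff_inter_eq_empty.2 hvdisj)
            (verts_finite hAfin) (verts_finite hBfin)]
      have hAlt : A.ncard < n := by
        rw [← hcard, hcardS]
        have : 1 ≤ B.ncard := (Set.ncard_pos hBfin).2 hBne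
        omega
      have hBlt : B.ncard < n := by
        rw [← hcard, hcardS]
        have : 1 ≤ A.ncard := (Set.ncard_pos hAfin).2 hAne
        omega
      have hA := ih A.ncard hAlt A hAfin rfl (bicirc_mono hAS hbi)
      have hB := ih B.ncard hBlt B hBfin rfl (bicirc_mono hBS hbi)
      omega

lemma bicirc_to_hall (hbi : G.BicircIndep I) :
    ∀ S ⊆ I, S.Finite → S.ncard ≤ (G.verts S).ncard := fun S hSI hSfin =>
  core S.ncard S hSfin rfl (bicirc_mono hSI hbi)

end Aux7
namespace Aux8

open Paper Paper.Multigraph Aux Aux2 Aux3 Aux4 Aux5 Aux6 Aux7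

variable {V E : Type*} {G : Multigraph V E} {I J S T : Set E}

/-- Hall-type independence condition -/
def HallIndep (G : Multigraph V E) (I : Set E) : Prop :=
  ∀ S ⊆ I, S.Finite → S.ncard ≤ (G.verts S).ncard

lemma hall_subset (h : HallIndep G J) (hIJ : I ⊆ J) : HallIndep G I :=
  fun S hS hfin => h S (hS.trans hIJ) hfin

/-- union of tight sets is tight -/
lemma tight_union (hI : HallIndep G I) {A B : Set E} (hA : A ⊆ I) (hB : B ⊆ I)
    (hAfin : A.Finite) (hBfin : B.Finite)
    (hAt : (G.verts A).ncard = A.ncard) (hBt : (G.verts B).ncard = B.ncard) :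
    (G.verts (A ∪ B)).ncard = (A ∪ B).ncard := by
  have hABfin : (A ∪ B).Finite := hAfin.union hBfin
  have h1 : (G.verts (A ∪ B)).ncard + (G.verts A ∩ G.verts B).ncard =
      (G.verts A).ncard + (G.verts B).ncard := by
    rw [verts_union]
    exact Set.ncard_union_add_ncard_inter _ _ (verts_finite hAfin) (verts_finite hBfin)
  have h2 : (A ∪ B).ncard + (A ∩ B).ncard = A.ncard + B.ncard :=
    Set.ncard_union_add_ncard_inter _ _ hAfin hBfin
  have h3 : (A ∩ B).ncard ≤ (G.verts (A ∩ B)).ncard :=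
    hI _ ((Set.inter_subset_left).trans hA) (hAfin.inter_of_left _)
  have h4 : (G.verts (A ∩ B)).ncard ≤ (G.verts A ∩ G.verts B).ncard := by
    refine Set.ncard_le_ncard ?_ ((verts_finite hAfin).inter_of_left _)
    intro x hx
    obtain ⟨e, he, hxe⟩ := hx
    exact ⟨⟨e, he.1, hxe⟩, ⟨e, he.2, hxe⟩⟩
  have h5 : (A ∪ B).ncard ≤ (G.verts (A ∪ B)).ncard :=
    hI _ (Set.union_subset hA hB) hABfin
  omega

lemma hall_aug (hI : HallIndep G I) (hIfin : I.Finite) (hJ : HallIndep G J)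
    (hJfin : J.Finite) (hlt : I.ncard < J.ncard) :
    ∃ e ∈ J, e ∉ I ∧ HallIndep G (insert e I) := by
  classical
  by_contra hcon
  push_neg at hcon
  -- for each e ∈ J \ I there is a tight subset of I covering the endpoints of e
  have key : ∀ e ∈ J \ I, ∃ A, A ⊆ I ∧ A.Finite ∧ (G.verts A).ncard = A.ncard ∧
      G.verts {e} ⊆ G.verts A := by
    rintro e ⟨heJ, heI⟩
    have hfail := hcon e heJ heI
    rw [HallIndep] at hfail
    push_neg at hfail
    obtain ⟨Se, hSe, hSefin, hSelt⟩ := hfail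
    have heSe : e ∈ Se := by
      by_contra heSe
      have : Se ⊆ I := fun f hf => by
        rcases Set.mem_insert_iff.1 (hSe hf) with rfl | h
        · exact absurd hf heSe
        · exact h
      exact absurd (hI Se this hSefin) (by omega)
    set A := Se \ {e} with hA
    have hAI : A ⊆ I := by
      rintro f ⟨hf1, hf2⟩
      rcases Set.mem_insert_iff.1 (hSe hf1) with rfl | h
      · exact absurd rfl hf2
      · exact h
    have hAfin : A.Finite := hSefin.diff
    have hAcard : A.ncard = Se.ncard - 1 := Set.ncard_diff_singleton_of_mem heSe
    have hhallA : A.ncard ≤ (G.verts A).ncard := hI A hAI hAfin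
    have hSeA : Se = A ∪ {e} := by
      rw [hA]
      rw [Set.diff_union_self]
      exact (Set.union_eq_self_of_subset_right (by simpa using heSe)).symm
    have hvSe : G.verts Se = G.verts A ∪ G.verts {e} := by
      rw [hSeA, verts_union]
    have hvA_le : (G.verts A).ncard ≤ (G.verts Se).ncard :=
      Set.ncard_le_ncard (hvSe ▸ Set.subset_union_left) (verts_finite hSefin)
    have hSepos : 1 ≤ Se.ncard := (Set.ncard_pos hSefin).2 ⟨e, heSe⟩
    -- equality chain
    have heq : (G.verts A).ncard = (G.verts Se).ncard := by omega
    have hveq : G.verts A = G.verts Se := by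
      apply Set.eq_of_subset_of_ncard_le (hvSe ▸ Set.subset_union_left) ?_
        (verts_finite hSefin)
      omega
    refine ⟨A, hAI, hAfin, by omega, ?_⟩
    rw [hveq, hvSe]
    exact Set.subset_union_right
  -- build a global tight set by finite induction over J \ I
  have hJIfin : (J \ I).Finite := hJfin.diff
  have hbuild : ∃ T, T ⊆ I ∧ T.Finite ∧ (G.verts T).ncard = T.ncard ∧
      ∀ e ∈ J \ I, G.verts {e} ⊆ G.verts T := by
    refine Set.Finite.induction_on_subset (motive := fun D _ => ∃ T, T ⊆ I ∧ T.Finite ∧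
      (G.verts T).ncard = T.ncard ∧ ∀ e ∈ D, G.verts {e} ⊆ G.verts T) _ hJIfin ?_ ?_
    · exact ⟨∅, Set.empty_subset _, Set.finite_empty, by simp [Multigraph.verts], by simp⟩
    · rintro a s haJI hsJI has ⟨T, hTI, hTfin, hTt, hTcov⟩
      obtain ⟨A, hAI, hAfin, hAt, hAcov⟩ := key a haJI
      refine ⟨T ∪ A, Set.union_subset hTI hAI, hTfin.union hAfin,
        tight_union hI hTI hAI hTfin hAfin hTt hAt, ?_⟩
      intro e he
      rcases Set.mem_insert_iff.1 he with rfl | he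
      · exact hAcov.trans (by rw [verts_union]; exact Set.subset_union_right)
      · exact (hTcov e he).trans (by rw [verts_union]; exact Set.subset_union_left)
  obtain ⟨T, hTI, hTfin, hTt, hTcov⟩ := hbuild
  -- final counting
  set A := (J \ I) ∪ (J ∩ T) with hA
  have hAJ : A ⊆ J := by
    rintro e (he | he)
    · exact he.1
    · exact he.1
  have hAfin : A.Finite := hJfin.subset hAJ
  have hhallA : A.ncard ≤ (G.verts A).ncard := hJ A hAJ hAfin
  have hvAT : G.verts A ⊆ G.verts T := by
    rintro x ⟨e, he, hxe⟩
    rcases he with he | he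
    · exact hTcov e he ⟨e, rfl, hxe⟩
    · exact ⟨e, he.2, hxe⟩
  have hvA_le : (G.verts A).ncard ≤ (G.verts T).ncard :=
    Set.ncard_le_ncard hvAT (verts_finite hTfin)
  have hAcard : A.ncard = (J \ I).ncard + (J ∩ T).ncard := by
    rw [hA]
    refine Set.ncard_union_eq ?_ (hJfin.diff) (hJfin.inter_of_left _)
    rw [Set.disjoint_left]
    rintro e ⟨-, heI⟩ ⟨-, heT⟩
    exact heI (hTI heT)
  have hTsplit : T.ncard = (T ∩ J).ncard + (T \ J).ncard :=
    (Set.ncard_inter_add_ncard_diff_eq_ncard T J hTfin).symm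
  have hTJcomm : (T ∩ J).ncard = (J ∩ T).ncard := by rw [Set.inter_comm]
  have hTJI : (T \ J).ncard ≤ (I \ J).ncard :=
    Set.ncard_le_ncard (Set.diff_subset_diff_left hTI) (hIfin.diff)
  have hJsplit : J.ncard = (J ∩ I).ncard + (J \ I).ncard :=
    (Set.ncard_inter_add_ncard_diff_eq_ncard J I hJfin).symm
  have hIsplit : I.ncard = (I ∩ J).ncard + (I \ J).ncard :=
    (Set.ncard_inter_add_ncard_diff_eq_ncard I J hIfin).symm
  have hIJcomm : (I ∩ J).ncard = (J ∩ I).ncard := by rw [Set.inter_comm]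
  omega

end Aux8

open Aux Aux2 Aux3 Aux4 Aux5 Aux6 Aux7 Aux8 in
/-- the bicircular matroid, via the Hall-type independence condition -/
noncomputable def bicircularMatroid {V E : Type*} (G : Multigraph V E) : Matroid E :=
  (IndepMatroid.ofFinitaryCardAugment Set.univ (HallIndep G)
    (fun S hS hfin => by
      have : S = ∅ := Set.subset_empty_iff.1 hS
      simp [this])
    (fun I J hJ hIJ => hall_subset hJ hIJ)
    (fun I J hI hIfin hJ hJfin hlt => hall_aug hI hIfin hJ hJfin hlt)
    (fun I h S => fun hS hfin => h S hS hfin S Set.Subset.rfl hfin)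
    (fun I _ => Set.subset_univ I)).matroid

/-- For every graph `G`, the bicircular independence condition (each
component of the induced subgraph contains at most one cycle) defines a matroid on `E(G)`. -/
theorem bicircular_exists_matroid {V E : Type*} (G : Multigraph V E) :
    ∃ M : Matroid E, M.E = univ ∧ ∀ I : Set E, M.Indep I ↔ G.BicircIndep I := by
  classical
  refine ⟨bicircularMatroid G, ?_, ?_⟩
  · rfl
  · intro I
    have hiff : (bicircularMatroid G).Indep I ↔ Aux8.HallIndep G I := by
      exact Iff.rfl
    rw [hiff]
    constructor
    · exact fun h => Aux6.hall_to_bicirc h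
    · exact fun h => Aux7.bicirc_to_hall h

end Paper
end
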